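/- The function H(x,y) = (a²x⁸ + 2ax⁵ + x² + y²)³ / (729(3 + 4ax³)⁸) is a first integral of the planar system ẋ = -y - (4/3)a x³ y, ẏ = x - (16/3)a x² y² + a x⁴, i.e., its derivative along the vector field vanishes identically wherever 3 + 4ax³ ≠ 0. -/

import Mathlib

/-- H(x,y) = (a²x⁸+2ax⁵+x²+y²)³/(729(3+4ax³)⁸) is a first integral of
ẋ = -y-(4/3)ax³y, ẏ = x-(16/3)ax²y²+ax⁴ wherever 3+4ax³ ≠ 0. -/
theorem stmt_0 (a : ℝ) :
    ∀ x y : ℝ, 3 + 4 * a * x ^ 3 ≠ 0 →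
      (-y - (4/3) * a * x ^ 3 * y) *
        deriv (fun x' : ℝ =>
          (a ^ 2 * x' ^ 8 + 2 * a * x' ^ 5 + x' ^ 2 + y ^ 2) ^ 3 /
            (729 * (3 + 4 * a * x' ^ 3) ^ 8)) x
      + (x - (16/3) * a * x ^ 2 * y ^ 2 + a * x ^ 4) *
        deriv (fun y' : ℝ =>
          (a ^ 2 * x ^ 8 + 2 * a * x ^ 5 + x ^ 2 + y' ^ 2) ^ 3 /
            (729 * (3 + 4 * a * x ^ 3) ^ 8)) y = 0 := by
  intro x y h
  have hN : HasDerivAt (fun x' : ℝ => a ^ 2 * x' ^ 8 + 2 * a * x' ^ 5 + x' ^ 2 + y ^ 2)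
      (a ^ 2 * (8 * x ^ 7) + 2 * a * (5 * x ^ 4) + 2 * x) x := by
    have := ((((hasDerivAt_pow 8 x).const_mul (a ^ 2)).add
      ((hasDerivAt_pow 5 x).const_mul (2 * a))).add (hasDerivAt_pow 2 x)).add_const (y ^ 2)
    refine this.congr_deriv ?_
    push_cast; ring
  have hNum : HasDerivAt (fun x' : ℝ => (a ^ 2 * x' ^ 8 + 2 * a * x' ^ 5 + x' ^ 2 + y ^ 2) ^ 3)
      (3 * (a ^ 2 * x ^ 8 + 2 * a * x ^ 5 + x ^ 2 + y ^ 2) ^ 2 *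
        (a ^ 2 * (8 * x ^ 7) + 2 * a * (5 * x ^ 4) + 2 * x)) x := by
    have := hN.pow 3
    refine this.congr_deriv ?_
    push_cast; ring
  have hDin : HasDerivAt (fun x' : ℝ => 3 + 4 * a * x' ^ 3) (4 * a * (3 * x ^ 2)) x := by
    have := ((hasDerivAt_pow 3 x).const_mul (4 * a)).const_add 3
    refine this.congr_deriv ?_
    push_cast; ring
  have hD : HasDerivAt (fun x' : ℝ => 729 * (3 + 4 * a * x' ^ 3) ^ 8)
      (729 * (8 * (3 + 4 * a * x ^ 3) ^ 7 * (4 * a * (3 * x ^ 2)))) x := by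
    have := (hDin.pow 8).const_mul 729
    refine this.congr_deriv ?_
    push_cast; ring
  have hDne : (729 : ℝ) * (3 + 4 * a * x ^ 3) ^ 8 ≠ 0 := by positivity
  have hx : deriv (fun x' : ℝ => (a ^ 2 * x' ^ 8 + 2 * a * x' ^ 5 + x' ^ 2 + y ^ 2) ^ 3 /
      (729 * (3 + 4 * a * x' ^ 3) ^ 8)) x = _ := (hNum.div hD hDne).deriv
  have hy : HasDerivAt (fun y' : ℝ =>
      (a ^ 2 * x ^ 8 + 2 * a * x ^ 5 + x ^ 2 + y' ^ 2) ^ 3 /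
        (729 * (3 + 4 * a * x ^ 3) ^ 8))
      ((3 * (a ^ 2 * x ^ 8 + 2 * a * x ^ 5 + x ^ 2 + y ^ 2) ^ 2 * (2 * y)) /
        (729 * (3 + 4 * a * x ^ 3) ^ 8)) y := by
    have hyN : HasDerivAt (fun y' : ℝ => a ^ 2 * x ^ 8 + 2 * a * x ^ 5 + x ^ 2 + y' ^ 2)
        (2 * y) y := by
      have := (hasDerivAt_pow 2 y).const_add (a ^ 2 * x ^ 8 + 2 * a * x ^ 5 + x ^ 2)
      refine this.congr_deriv ?_
      push_cast; ring
    have := (hyN.pow 3).div_const (729 * (3 + 4 * a * x ^ 3) ^ 8)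
    refine this.congr_deriv ?_
    push_cast; ring
  rw [hx, hy.deriv]
  field_simp
  ring
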